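/- Let x_s ∈ ℂ with x_s ≠ 0 and ε > 3. Set r to be the unique positive solution of ((1 + r/|x_s|)³ − 1)/(r/|x_s|) = ε. Then for every x ∈ ℂ with |x − x_s| ≤ r, one has | |x|²x − |x_s|²x_s | ≤ ε|x_s|²|x − x_s|. -/

import Mathlib

theorem lemma1_scaled (xs : ℂ) (hxs : xs ≠ 0) (ε : ℝ) (hε : 3 < ε) (r : ℝ) (hr : 0 < r)
    (hroot : ((1 + r / ‖xs‖) ^ 3 - 1) / (r / ‖xs‖) = ε) :
    ∀ x : ℂ, ‖x - xs‖ ≤ r →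
      ‖(‖x‖ : ℂ) ^ 2 * x - (‖xs‖ : ℂ) ^ 2 * xs‖
        ≤ ε * ‖xs‖ ^ 2 * ‖x - xs‖ := by
  intro x hx
  set a := ‖xs‖ with ha_def
  have ha : 0 < a := by
    simpa [ha_def] using (norm_pos_iff.mpr hxs)
  have hra : 0 < r / a := div_pos hr ha
  -- key algebraic identity: ε * a^2 = (a+r)^2 + (a+r)*a + a^2
  have hε_eq : ε = (r / a) ^ 2 + 3 * (r / a) + 3 := by
    rw [← hroot]
    field_simp
    ring
  have key : ε * a ^ 2 = (a + r) ^ 2 + (a + r) * a + a ^ 2 := by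
    rw [hε_eq]
    field_simp
    ring
  set d := ‖x - xs‖ with hd_def
  have hd0 : 0 ≤ d := norm_nonneg _
  have hxabs : ‖x‖ ≤ a + r := by
    calc ‖x‖ = ‖xs + (x - xs)‖ := by ring_nf
    _ ≤ a + d := by simpa [ha_def, hd_def] using norm_add_le xs (x - xs)
    _ ≤ a + r := by linarith
  have hsplit : (‖x‖ : ℂ) ^ 2 * x - (a : ℂ) ^ 2 * xs
      = (‖x‖ : ℂ) ^ 2 * (x - xs) + ((‖x‖ : ℂ) ^ 2 - (a : ℂ) ^ 2) * xs := by
    ring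
  have habsdiff : |‖x‖ - a| ≤ d := by
    simpa [ha_def, hd_def] using abs_norm_sub_norm_le x xs
  have hbound : ‖(‖x‖ : ℂ) ^ 2 * x - (a : ℂ) ^ 2 * xs‖
      ≤ ‖x‖ ^ 2 * d + (‖x‖ + a) * d * a := by
    rw [hsplit]
    refine le_trans (norm_add_le _ _) ?_
    have h1 : ‖(‖x‖ : ℂ) ^ 2 * (x - xs)‖ = ‖x‖ ^ 2 * d := by
      simp [norm_mul, hd_def, abs_of_nonneg (norm_nonneg x)]
    have h2 : ‖((‖x‖ : ℂ) ^ 2 - (a : ℂ) ^ 2) * xs‖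
        ≤ (‖x‖ + a) * d * a := by
      rw [norm_mul]
      have : ‖(‖x‖ : ℂ) ^ 2 - (a : ℂ) ^ 2‖
          = |‖x‖ ^ 2 - a ^ 2| := by
        rw [show ((‖x‖ : ℂ) ^ 2 - (a : ℂ) ^ 2) = ((‖x‖ ^ 2 - a ^ 2 : ℝ) : ℂ) by
          push_cast; ring]
        rw [Complex.norm_real, Real.norm_eq_abs]
      rw [this]
      have hfac : |‖x‖ ^ 2 - a ^ 2| = (‖x‖ + a) * |‖x‖ - a| := by
        rw [show ‖x‖ ^ 2 - a ^ 2 = (‖x‖ + a) * (‖x‖ - a) by ring,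
          abs_mul, abs_of_nonneg (by positivity : (0:ℝ) ≤ ‖x‖ + a)]
      rw [hfac]
      have : (‖x‖ + a) * |‖x‖ - a| ≤ (‖x‖ + a) * d :=
        mul_le_mul_of_nonneg_left habsdiff (by positivity)
      calc (‖x‖ + a) * |‖x‖ - a| * a ≤ (‖x‖ + a) * d * a := by
            exact mul_le_mul_of_nonneg_right this ha.le
      _ = (‖x‖ + a) * d * a := rfl
    linarith [h1 ▸ le_refl (‖x‖ ^ 2 * d), h2,
      le_of_eq h1]
  have hfinal : ‖x‖ ^ 2 * d + (‖x‖ + a) * d * a ≤ ε * a ^ 2 * d := by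
    rw [key]
    nlinarith [hd0, ha.le, norm_nonneg x,
      mul_nonneg (mul_nonneg hd0 (sub_nonneg.2 hxabs))
        (by positivity : (0:ℝ) ≤ a + r + ‖x‖),
      mul_nonneg (mul_nonneg hd0 (sub_nonneg.2 hxabs)) ha.le]
  calc ‖(‖x‖ : ℂ) ^ 2 * x - (a : ℂ) ^ 2 * xs‖
      ≤ ‖x‖ ^ 2 * d + (‖x‖ + a) * d * a := hbound
    _ ≤ ε * a ^ 2 * d := hfinal
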